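/- For each provider i and each trip (j,l,t), the partial derivative of Φ with respect to p_i equals the partial derivative of provider i's payoff F̃_i with respect to p_i, where F̃_i(p_i, p_k) = p_i·D·(1/2 − p_i/p_max + p_k/(2·p_max)) − c·D·(1/2 − p_i/p_max + p_k/(2·p_max)) and Φ(p_1, p_2) = p_1·p_2·D/(2·p_max) + Σ_{i=1,2} [p_i·D·(1/2 − p_i/p_max) + c·D·p_i/p_max]. -/

import Mathlib

lemma quad_deriv (A B C x : ℝ) : deriv (fun p => A*p^2+B*p+C) x = 2*A*x+B := by
  have h : HasDerivAt (fun p => A*p^2+B*p+C) (2*A*x+B) x := by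
    have h1 := ((hasDerivAt_pow 2 x).const_mul A).add
      (((hasDerivAt_id x).const_mul B).add_const C)
    refine (h1.congr_deriv (by rw [show (2:ℕ)-1 = 1 from rfl]; push_cast; ring)).congr_of_eventuallyEq (Filter.Eventually.of_forall fun p => ?_)
    simp only [Pi.add_apply, id]; ring
  exact h.deriv

theorem potential_partial_derivatives (pmax D c : ℝ) (hpmax : 0 < pmax) (hD : 0 < D) :
    let F : ℝ → ℝ → ℝ := fun pi pk =>
      pi * D * (1/2 - pi/pmax + pk/(2*pmax)) - c * D * (1/2 - pi/pmax + pk/(2*pmax))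
    let Φ : ℝ → ℝ → ℝ := fun p1 p2 =>
      p1 * p2 * D / (2*pmax)
        + (p1 * D * (1/2 - p1/pmax) + c * D * p1/pmax)
        + (p2 * D * (1/2 - p2/pmax) + c * D * p2/pmax)
    (∀ p1 p2 : ℝ, deriv (fun p => Φ p p2) p1 = deriv (fun p => F p p2) p1) ∧
    (∀ p1 p2 : ℝ, deriv (fun p => Φ p1 p) p2 = deriv (fun p => F p p1) p2) := by
  intro F Φ
  have hp : pmax ≠ 0 := ne_of_gt hpmax
  have key : ∀ a b : ℝ,
      deriv (fun p => Φ p b) a = deriv (fun p => F p b) a := by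
    intro a b
    have hΦ : (fun p => Φ p b) = fun p =>
        (-(D/pmax))*p^2 + (b*D/(2*pmax) + D/2 + c*D/pmax)*p
          + (b * D * (1/2 - b/pmax) + c * D * b/pmax) := by
      funext p
      simp only [F, Φ]
      field_simp
      ring
    have hF : (fun p => F p b) = fun p =>
        (-(D/pmax))*p^2 + (b*D/(2*pmax) + D/2 + c*D/pmax)*p
          + (- (c * D * (1/2 + b/(2*pmax)))) := by
      funext p
      simp only [F]
      field_simp
      ring
    rw [hΦ, hF, quad_deriv, quad_deriv]
  constructor
  · intro p1 p2; exact key p1 p2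
  · intro p1 p2
    have hsym : (fun p => Φ p1 p) = fun p => Φ p p1 := by
      funext p; simp only [Φ]; ring
    rw [hsym]; exact key p2 p1
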